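/- The toric ideal I_{S_3} is the principal ideal generated by the single binomial x_{123}·x_{231}·x_{312} − x_{132}·x_{213}·x_{321}, where each subscript is the one-line notation of a permutation of {1,2,3}. -/

import Mathlib

/-- The toric ideal `I_{S_3}`: the kernel of
`φ : ℂ[x_π : π ∈ S_3] → ℂ[t_{ij}]`, `x_π ↦ ∏_i t_{i, π(i)}`. -/
noncomputable def toricIdeal3 : Ideal (MvPolynomial (Equiv.Perm (Fin 3)) ℂ) :=
  RingHom.ker (MvPolynomial.aeval fun π : Equiv.Perm (Fin 3) =>
    ∏ i : Fin 3, MvPolynomial.X (R := ℂ) (i, π i) :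
      MvPolynomial (Equiv.Perm (Fin 3)) ℂ →ₐ[ℂ] MvPolynomial (Fin 3 × Fin 3) ℂ).toRingHom

/-- The permutation with one-line notation `231` (0-indexed: `0 ↦ 1, 1 ↦ 2, 2 ↦ 0`). -/
def p231 : Equiv.Perm (Fin 3) := finRotate 3

open MvPolynomial Finsupp Equiv

abbrev S3 := Equiv.Perm (Fin 3)

noncomputable def M3 (π : S3) : Fin 3 × Fin 3 →₀ ℕ := ∑ i : Fin 3, Finsupp.single (i, π i) 1

lemma M3_apply (π : S3) (i j : Fin 3) : M3 π (i, j) = if π i = j then 1 else 0 := by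
  fin_cases i <;>
    simp [M3, Fin.sum_univ_three, Finsupp.single_apply, Prod.ext_iff]

noncomputable def A3 (u : S3 →₀ ℕ) : Fin 3 × Fin 3 →₀ ℕ := u.sum fun π n => n • M3 π

lemma A3_apply (u : S3 →₀ ℕ) (q : Fin 3 × Fin 3) :
    A3 u q = ∑ π : S3, u π * M3 π q := by
  rw [A3, Finsupp.sum_apply, Finsupp.sum_fintype]
  · simp [mul_comm]
  · intro i; simp

lemma sum_S3 {β : Type*} [AddCommMonoid β] (f : S3 → β) :
    ∑ π : S3, f π = f 1 + f p231 + f p231⁻¹ + f (swap 0 1) + f (swap 0 2) + f (swap 1 2) := by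
  have h : (Finset.univ : Finset S3)
      = {1, p231, p231⁻¹, swap 0 1, swap 0 2, swap 1 2} := by decide
  rw [h]
  rw [Finset.sum_insert (by decide), Finset.sum_insert (by decide),
    Finset.sum_insert (by decide), Finset.sum_insert (by decide),
    Finset.sum_insert (by decide), Finset.sum_singleton]
  abel

lemma six_cases (π : S3) : π = 1 ∨ π = p231 ∨ π = p231⁻¹ ∨ π = swap 0 1 ∨ π = swap 0 2 ∨ π = swap 1 2 := by
  revert π; decide

lemma A3_pt (u : S3 →₀ ℕ) (i j : Fin 3) : A3 u (i,j) =
    (if (1:S3) i = j then u 1 else 0) + (if p231 i = j then u p231 else 0)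
    + (if p231⁻¹ i = j then u p231⁻¹ else 0) + (if swap 0 1 i = j then u (swap 0 1) else 0)
    + (if swap 0 2 i = j then u (swap 0 2) else 0) + (if swap 1 2 i = j then u (swap 1 2) else 0) := by
  rw [A3_apply, sum_S3]
  simp only [M3_apply, mul_ite, mul_one, mul_zero]

lemma A3_00 (u : S3 →₀ ℕ) : A3 u (0,0) = u 1 + u (swap 1 2) := by
  rw [A3_pt]; simp (config := { decide := true })
lemma A3_01 (u : S3 →₀ ℕ) : A3 u (0,1) = u p231 + u (swap 0 1) := by
  rw [A3_pt]; simp (config := { decide := true })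
lemma A3_02 (u : S3 →₀ ℕ) : A3 u (0,2) = u p231⁻¹ + u (swap 0 2) := by
  rw [A3_pt]; simp (config := { decide := true })
lemma A3_10 (u : S3 →₀ ℕ) : A3 u (1,0) = u p231⁻¹ + u (swap 0 1) := by
  rw [A3_pt]; simp (config := { decide := true })
lemma A3_11 (u : S3 →₀ ℕ) : A3 u (1,1) = u 1 + u (swap 0 2) := by
  rw [A3_pt]; simp (config := { decide := true })
lemma A3_12 (u : S3 →₀ ℕ) : A3 u (1,2) = u p231 + u (swap 1 2) := by
  rw [A3_pt]; simp (config := { decide := true })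
lemma A3_20 (u : S3 →₀ ℕ) : A3 u (2,0) = u p231 + u (swap 0 2) := by
  rw [A3_pt]; simp (config := { decide := true })
lemma A3_21 (u : S3 →₀ ℕ) : A3 u (2,1) = u p231⁻¹ + u (swap 1 2) := by
  rw [A3_pt]; simp (config := { decide := true })
lemma A3_22 (u : S3 →₀ ℕ) : A3 u (2,2) = u 1 + u (swap 0 1) := by
  rw [A3_pt]; simp (config := { decide := true })

def normal3 (u : S3 →₀ ℕ) : Prop := u (swap 0 1) = 0 ∨ u (swap 0 2) = 0 ∨ u (swap 1 2) = 0

lemma A3_inj {u v : S3 →₀ ℕ} (hu : normal3 u) (hv : normal3 v) (h : A3 u = A3 v) : u = v := by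
  have e : ∀ q : Fin 3 × Fin 3, A3 u q = A3 v q := fun q => DFunLike.congr_fun h q
  have h00 := e (0,0); rw [A3_00 u, A3_00 v] at h00
  have h01 := e (0,1); rw [A3_01 u, A3_01 v] at h01
  have h02 := e (0,2); rw [A3_02 u, A3_02 v] at h02
  have h10 := e (1,0); rw [A3_10 u, A3_10 v] at h10
  have h11 := e (1,1); rw [A3_11 u, A3_11 v] at h11
  have h12 := e (1,2); rw [A3_12 u, A3_12 v] at h12
  ext π
  rcases six_cases π with rfl | rfl | rfl | rfl | rfl | rfl <;>
    rcases hu with hu | hu | hu <;> rcases hv with hv | hv | hv <;> omega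

noncomputable def φ3 : MvPolynomial S3 ℂ →ₐ[ℂ] MvPolynomial (Fin 3 × Fin 3) ℂ :=
  aeval fun π : S3 => ∏ i : Fin 3, X (R := ℂ) (i, π i)

lemma X_eq_monomial {σ : Type*} (a : σ) : (X a : MvPolynomial σ ℂ) = monomial (single a 1) 1 := by
  rw [← pow_one (X a), X_pow_eq_monomial]

lemma phi_X (π : S3) : φ3 (X π) = monomial (M3 π) 1 := by
  rw [φ3, aeval_X]
  rw [Fin.prod_univ_three, X_eq_monomial, X_eq_monomial, X_eq_monomial,
    monomial_mul, monomial_mul, M3, Fin.sum_univ_three]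
  norm_num

lemma A3_add (u v : S3 →₀ ℕ) : A3 (u + v) = A3 u + A3 v := by
  rw [A3, A3, A3, Finsupp.sum_add_index]
  · intro π _; exact zero_smul _ _
  · intro π _ m n; exact add_smul _ _ _

lemma A3_single (π : S3) (n : ℕ) : A3 (single π n) = n • M3 π := by
  rw [A3]; exact Finsupp.sum_single_index (zero_smul _ _)

lemma phi_monomial (u : S3 →₀ ℕ) : φ3 (monomial u 1) = monomial (A3 u) 1 := by
  induction u using Finsupp.induction with
  | zero => simp [A3]
  | single_add π n f hπ hn ih =>
    rw [show monomial (Finsupp.single π n + f) (1:ℂ) = monomial (single π n) 1 * monomial f 1 by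
        rw [monomial_mul, one_mul],
      map_mul, ih, show (monomial (single π n) (1:ℂ)) = X π ^ n by rw [X_pow_eq_monomial],
      map_pow, phi_X, monomial_pow, one_pow, monomial_mul, one_mul, A3_add, A3_single]

lemma phi_monomial' (u : S3 →₀ ℕ) (c : ℂ) : φ3 (monomial u c) = monomial (A3 u) c := by
  rw [show monomial u c = C c * monomial u 1 by rw [C_mul_monomial, mul_one],
    map_mul, phi_monomial, show φ3 (C c) = C c from aeval_C _ c, C_mul_monomial, mul_one]

noncomputable def O3 : S3 →₀ ℕ := single (swap 1 2) 1 + single (swap 0 1) 1 + single (swap 0 2) 1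
noncomputable def E3 : S3 →₀ ℕ := single 1 1 + single p231 1 + single p231⁻¹ 1

lemma O3_s01 : O3 (swap 0 1) = 1 := by
  simp (config := { decide := true }) [O3, Finsupp.single_apply]
lemma O3_s02 : O3 (swap 0 2) = 1 := by
  simp (config := { decide := true }) [O3, Finsupp.single_apply]
lemma O3_s12 : O3 (swap 1 2) = 1 := by
  simp (config := { decide := true }) [O3, Finsupp.single_apply]
lemma O3_1 : O3 1 = 0 := by
  simp (config := { decide := true }) [O3, Finsupp.single_apply]
lemma O3_c : O3 p231 = 0 := by
  simp (config := { decide := true }) [O3, Finsupp.single_apply]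
lemma O3_c2 : O3 p231⁻¹ = 0 := by
  simp (config := { decide := true }) [O3, Finsupp.single_apply]
lemma E3_s01 : E3 (swap 0 1) = 0 := by
  simp (config := { decide := true }) [E3, Finsupp.single_apply]
lemma E3_s02 : E3 (swap 0 2) = 0 := by
  simp (config := { decide := true }) [E3, Finsupp.single_apply]
lemma E3_s12 : E3 (swap 1 2) = 0 := by
  simp (config := { decide := true }) [E3, Finsupp.single_apply]

def k3 (u : S3 →₀ ℕ) : ℕ := min (u (swap 0 1)) (min (u (swap 0 2)) (u (swap 1 2)))

noncomputable def r3 (u : S3 →₀ ℕ) : S3 →₀ ℕ := (u - k3 u • O3) + k3 u • E3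

lemma r3_apply (u : S3 →₀ ℕ) (π : S3) : r3 u π = u π - k3 u * O3 π + k3 u * E3 π := by
  rw [r3, Finsupp.add_apply, Finsupp.tsub_apply, Finsupp.smul_apply, Finsupp.smul_apply,
    smul_eq_mul, smul_eq_mul]

lemma normal3_r3 (u : S3 →₀ ℕ) : normal3 (r3 u) := by
  rcases Nat.lt_or_ge (u (swap 0 1)) (min (u (swap 0 2)) (u (swap 1 2))) with h | h
  · left; rw [r3_apply, O3_s01, E3_s01]
    have : k3 u = u (swap 0 1) := by rw [k3]; omega
    omega
  rcases Nat.lt_or_ge (u (swap 0 2)) (u (swap 1 2)) with h2 | h2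
  · right; left; rw [r3_apply, O3_s02, E3_s02]
    have : k3 u = u (swap 0 2) := by rw [k3]; omega
    omega
  · right; right; rw [r3_apply, O3_s12, E3_s12]
    have : k3 u = u (swap 1 2) := by rw [k3]; omega
    omega

noncomputable def gg : MvPolynomial S3 ℂ :=
  X 1 * X p231 * X p231⁻¹ - X (swap 1 2) * X (swap 0 1) * X (swap 0 2)

lemma monomial_E3 : (monomial E3 1 : MvPolynomial S3 ℂ) = X 1 * X p231 * X p231⁻¹ := by
  rw [X_eq_monomial, X_eq_monomial, X_eq_monomial, monomial_mul, monomial_mul, E3]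
  norm_num

lemma monomial_O3 : (monomial O3 1 : MvPolynomial S3 ℂ)
    = X (swap 1 2) * X (swap 0 1) * X (swap 0 2) := by
  rw [X_eq_monomial, X_eq_monomial, X_eq_monomial, monomial_mul, monomial_mul, O3]
  norm_num

lemma red_mem (u : S3 →₀ ℕ) :
    (monomial u 1 : MvPolynomial S3 ℂ) - monomial (r3 u) 1 ∈ Ideal.span {gg} := by
  have hle : k3 u • O3 ≤ u := by
    rw [Finsupp.le_def]
    intro π
    rw [Finsupp.smul_apply, smul_eq_mul]
    rcases six_cases π with rfl | rfl | rfl | rfl | rfl | rfl <;>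
      simp only [O3_1, O3_c, O3_c2, O3_s01, O3_s02, O3_s12, k3] <;> omega
  have hu : (u - k3 u • O3) + k3 u • O3 = u := tsub_add_cancel_of_le hle
  have e1 : (monomial u 1 : MvPolynomial S3 ℂ)
      = monomial (u - k3 u • O3) 1 * (monomial O3 1) ^ k3 u := by
    rw [monomial_pow, one_pow, monomial_mul, one_mul, hu]
  have e2 : (monomial (r3 u) 1 : MvPolynomial S3 ℂ)
      = monomial (u - k3 u • O3) 1 * (monomial E3 1) ^ k3 u := by
    rw [monomial_pow, one_pow, monomial_mul, one_mul, r3]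
  rw [e1, e2, ← mul_sub]
  refine Ideal.mem_span_singleton.2 (Dvd.dvd.mul_left ?_ _)
  have h1 := sub_dvd_pow_sub_pow (monomial E3 1 : MvPolynomial S3 ℂ) (monomial O3 1) (k3 u)
  rw [monomial_E3, monomial_O3] at h1
  rw [monomial_E3, monomial_O3]
  have h2 : gg ∣ -((X 1 * X p231 * X p231⁻¹)^(k3 u)
      - (X (swap 1 2) * X (swap 0 1) * X (swap 0 2))^(k3 u)) := dvd_neg.2 h1
  rwa [neg_sub] at h2

lemma M3_even_odd : M3 1 + M3 p231 + M3 p231⁻¹ = M3 (swap 1 2) + M3 (swap 0 1) + M3 (swap 0 2) := by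
  ext q
  obtain ⟨i, j⟩ := q
  simp only [Finsupp.add_apply, M3_apply]
  fin_cases i <;> fin_cases j <;> simp (config := { decide := true })

lemma phi_gg : φ3 gg = 0 := by
  simp only [gg, map_sub, map_mul, phi_X, monomial_mul, one_mul, mul_one]
  rw [M3_even_odd, sub_self]


/-- `I_{S_3}` is the principal ideal generated by the binomial
`x_{123} x_{231} x_{312} - x_{132} x_{213} x_{321}` (one-line notation, where e.g. the
permutation `132` is the 0-indexed transposition `Equiv.swap 1 2`). -/
theorem toricIdeal3_eq_span_singleton :
    toricIdeal3 = Ideal.span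
      {MvPolynomial.X (R := ℂ) (1 : Equiv.Perm (Fin 3)) * MvPolynomial.X p231
          * MvPolynomial.X p231⁻¹
        - MvPolynomial.X (Equiv.swap 1 2) * MvPolynomial.X (Equiv.swap 0 1)
          * MvPolynomial.X (Equiv.swap 0 2)} := by
  suffices h : toricIdeal3 = Ideal.span {gg} by exact h
  have hspan_ker : Ideal.span {gg} ≤ toricIdeal3 := by
    rw [Ideal.span_le, Set.singleton_subset_iff]
    exact RingHom.mem_ker.2 phi_gg
  refine le_antisymm ?_ hspan_ker
  intro p hp
  have hp0 : φ3 p = 0 := RingHom.mem_ker.1 hp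
  set q : MvPolynomial S3 ℂ := ∑ u ∈ p.support, monomial (r3 u) (coeff u p) with hq
  have hpq : p - q ∈ Ideal.span {gg} := by
    rw [hq]
    nth_rewrite 1 [as_sum p]
    rw [← Finset.sum_sub_distrib]
    apply Ideal.sum_mem
    intro u _
    have h1 : (monomial u (coeff u p) : MvPolynomial S3 ℂ) - monomial (r3 u) (coeff u p)
        = C (coeff u p) * (monomial u 1 - monomial (r3 u) 1) := by
      rw [mul_sub, C_mul_monomial, C_mul_monomial, mul_one]
    rw [h1]
    exact Ideal.mul_mem_left _ _ (red_mem u)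
  have hq0 : φ3 q = 0 := by
    have h2 : φ3 (p - q) = 0 := RingHom.mem_ker.1 (hspan_ker hpq)
    rw [map_sub, hp0, zero_sub, neg_eq_zero] at h2
    exact h2
  have hcoeffq : ∀ w : S3 →₀ ℕ, coeff w q = ∑ u ∈ p.support,
      if r3 u = w then coeff u p else 0 := by
    intro w
    rw [hq, coeff_sum]
    exact Finset.sum_congr rfl fun u _ => coeff_monomial w (r3 u) (coeff u p)
  have hqz : q = 0 := by
    apply MvPolynomial.ext
    intro w
    rw [coeff_zero]
    by_cases hw : normal3 w
    · have e1 : coeff (A3 w) (φ3 q) = coeff w q := by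
        rw [hq, map_sum, coeff_sum, coeff_sum]
        refine Finset.sum_congr rfl fun u _ => ?_
        rw [phi_monomial', coeff_monomial, coeff_monomial]
        by_cases h : r3 u = w
        · rw [if_pos h, if_pos (by rw [h])]
        · rw [if_neg h, if_neg (fun hA => h (A3_inj (normal3_r3 u) hw hA))]
      rw [← e1, hq0, coeff_zero]
    · rw [hcoeffq w]
      refine Finset.sum_eq_zero fun u _ => ?_
      rw [if_neg (fun (h : r3 u = w) => hw (h ▸ normal3_r3 u))]
  rw [hqz, sub_zero] at hpq
  exact hpq
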